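/- arXiv:quant-ph/0611146 — 2 statements merged into one kernel-verified Lean document; each statement's English description precedes it below -/
import Mathlib

section
/- For one-qubit states, if σ is any density matrix with Bloch vector w (|w| ≤ 1) and ρ(u), ρ(v) are pure states with unit Bloch vectors u, v, then d_B(σ,ρ(u)) ≤ d_B(σ,ρ(v)) if and only if w·u ≥ w·v, if and only if |w − u| ≤ |w − v|. Hence the Bures-Voronoi and Euclidean-Voronoi diagrams with pure-state sites coincide on the whole Bloch ball. -/
open Matrix
open scoped ComplexOrder InnerProductSpace

def IsDensity {d : ℕ} (ρ : Matrix (Fin d) (Fin d) ℂ) : Prop :=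
  ρ.IsHermitian ∧ ρ.trace = 1 ∧ ρ.PosSemidef

def IsPure {d : ℕ} (ρ : Matrix (Fin d) (Fin d) ℂ) : Prop :=
  IsDensity ρ ∧ ρ * ρ = ρ

noncomputable def matLog {d : ℕ} (A : Matrix (Fin d) (Fin d) ℂ) : Matrix (Fin d) (Fin d) ℂ :=
  if h : A.IsHermitian then
    (h.eigenvectorUnitary : Matrix (Fin d) (Fin d) ℂ) *
      Matrix.diagonal (fun i => (Real.log (h.eigenvalues i) : ℂ)) *
      (star (h.eigenvectorUnitary : Matrix (Fin d) (Fin d) ℂ))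
  else 0

noncomputable def qDiv {d : ℕ} (σ ρ : Matrix (Fin d) (Fin d) ℂ) : ℝ :=
  ((σ * (matLog σ - matLog ρ)).trace).re

noncomputable def rhoBloch (u : EuclideanSpace ℝ (Fin 3)) : Matrix (Fin 2) (Fin 2) ℂ :=
  !![(((1 + u 2) / 2 : ℝ) : ℂ), ((u 0 : ℂ) - Complex.I * (u 1 : ℂ)) / 2;
     ((u 0 : ℂ) + Complex.I * (u 1 : ℂ)) / 2, (((1 - u 2) / 2 : ℝ) : ℂ)]

noncomputable def dBpure {d : ℕ} (ρ σ : Matrix (Fin d) (Fin d) ℂ) : ℝ :=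
  Real.sqrt (1 - ((ρ * σ).trace).re)

noncomputable def dFS {d : ℕ} (ρ σ : Matrix (Fin d) (Fin d) ℂ) : ℝ :=
  Real.arccos (Real.sqrt (((ρ * σ).trace).re))

/-- Bures distance from a (possibly mixed) state to a pure state:
`d_B(σ,ρ) = √(1 − √(Tr σρ))`. -/
noncomputable def dBmixedPure {d : ℕ} (σ ρ : Matrix (Fin d) (Fin d) ℂ) : ℝ :=
  Real.sqrt (1 - Real.sqrt (((σ * ρ).trace).re))

lemma trace_rho (w u : EuclideanSpace ℝ (Fin 3)) :
    ((rhoBloch w * rhoBloch u).trace).re = (1 + ⟪w, u⟫_ℝ) / 2 := by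
  have : (rhoBloch w * rhoBloch u).trace = (((1 + ⟪w, u⟫_ℝ) / 2 : ℝ) : ℂ) := by
    simp [rhoBloch, Matrix.trace_fin_two, Matrix.mul_apply, Fin.sum_univ_two,
      PiLp.inner_apply, Fin.sum_univ_three]
    ring_nf
    simp [Complex.ext_iff]
    ring
  rw [this, Complex.ofReal_re]

theorem stmt7 (w u v : EuclideanSpace ℝ (Fin 3))
    (hw : ‖w‖ ≤ 1) (hu : ‖u‖ = 1) (hv : ‖v‖ = 1) :
    (dBmixedPure (rhoBloch w) (rhoBloch u) ≤ dBmixedPure (rhoBloch w) (rhoBloch v) ↔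
      ⟪w, u⟫_ℝ ≥ ⟪w, v⟫_ℝ) ∧
    (⟪w, u⟫_ℝ ≥ ⟪w, v⟫_ℝ ↔ ‖w - u‖ ≤ ‖w - v‖) := by
  have hbound : ∀ x : EuclideanSpace ℝ (Fin 3), ‖x‖ = 1 → |⟪w, x⟫_ℝ| ≤ 1 := fun x hx => by
    calc |⟪w, x⟫_ℝ| ≤ ‖w‖ * ‖x‖ := abs_real_inner_le_norm w x
    _ ≤ 1 := by rw [hx]; simpa using hw
  obtain ⟨hau1, hau2⟩ := abs_le.1 (hbound u hu)
  obtain ⟨hav1, hav2⟩ := abs_le.1 (hbound v hv)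
  constructor
  · rw [dBmixedPure, dBmixedPure, trace_rho, trace_rho]
    have hsa : Real.sqrt ((1 + ⟪w, u⟫_ℝ) / 2) ≤ 1 := Real.sqrt_le_one.mpr (by linarith)
    have hsb : Real.sqrt ((1 + ⟪w, v⟫_ℝ) / 2) ≤ 1 := Real.sqrt_le_one.mpr (by linarith)
    rw [Real.sqrt_le_sqrt_iff (by linarith), sub_le_sub_iff_left,
      Real.sqrt_le_sqrt_iff (by linarith : (0:ℝ) ≤ (1 + ⟪w, u⟫_ℝ) / 2)]
    constructor <;> intro h <;> simp only [ge_iff_le] at * <;> linarith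
  · rw [← Real.sqrt_sq (norm_nonneg (w - u)), ← Real.sqrt_sq (norm_nonneg (w - v)),
      Real.sqrt_le_sqrt_iff (sq_nonneg _), norm_sub_sq_real, norm_sub_sq_real, hu, hv]
    constructor <;> intro h <;> simp only [ge_iff_le] at * <;> nlinarith
end

section
/- For one-qubit full-rank states ρ_t(u), ρ_t(v) with Bloch vectors tu, tv (u, v unit, 0 < t < 1) and any density matrix σ with Bloch vector w: D(σ‖ρ_t(u)) ≤ D(σ‖ρ_t(v)) if and only if w·u ≥ w·v. -/
open Matrix
open scoped ComplexOrder InnerProductSpace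

lemma rhoBloch_herm (x : EuclideanSpace ℝ (Fin 3)) : (rhoBloch x).IsHermitian := by
  unfold Matrix.IsHermitian
  ext i j
  fin_cases i <;> fin_cases j <;>
    simp [rhoBloch, Matrix.conjTranspose_apply, Complex.ext_iff]

lemma rhoBloch_quad (x : EuclideanSpace ℝ (Fin 3)) (s : ℝ)
    (hs : x 0 ^ 2 + x 1 ^ 2 + x 2 ^ 2 = s) :
    rhoBloch x * rhoBloch x - rhoBloch x + (((1 - s) / 4 : ℝ) : ℂ) • 1 = 0 := by
  ext i j
  fin_cases i <;> fin_cases j <;>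
    simp [rhoBloch, Matrix.mul_apply, Fin.sum_univ_two, Matrix.one_apply] <;>
    subst hs <;> push_cast <;> ring_nf <;> simp [Complex.I_sq]

lemma eigen_quad {d : ℕ} {A : Matrix (Fin d) (Fin d) ℂ} (hA : A.IsHermitian) (c : ℝ)
    (h : A * A - A + ((c : ℂ)) • 1 = 0) (i : Fin d) :
    hA.eigenvalues i ^ 2 - hA.eigenvalues i + c = 0 := by
  set U : Matrix (Fin d) (Fin d) ℂ := (hA.eigenvectorUnitary : Matrix (Fin d) (Fin d) ℂ)
  have hUU : star U * U = 1 := Unitary.coe_star_mul_self hA.eigenvectorUnitary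
  have hUU' : U * star U = 1 := Unitary.coe_mul_star_self hA.eigenvectorUnitary
  set D : Matrix (Fin d) (Fin d) ℂ := Matrix.diagonal (RCLike.ofReal ∘ hA.eigenvalues)
  have hspec : A = U * D * star U := hA.spectral_theorem
  have hD : D * D - D + ((c : ℂ)) • 1 = 0 := by
    have h2 : U * (D * D - D + ((c : ℂ)) • 1) * star U = 0 := by
      have he : U * (D * D - D + ((c : ℂ)) • 1) * star U
          = A * A - A + ((c : ℂ)) • 1 := by
        rw [hspec]
        rw [show U * D * star U * (U * D * star U) = U * (D * (star U * U) * D) * star U by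
          noncomm_ring]
        rw [hUU]
        simp only [mul_sub, sub_mul, mul_add, add_mul, Matrix.mul_smul, Matrix.smul_mul,
          mul_one, one_mul]
        rw [hUU']
      rw [he, h]
    calc D * D - D + ((c : ℂ)) • 1
        = star U * (U * (D * D - D + ((c : ℂ)) • 1) * star U) * U := by
          rw [show star U * (U * (D * D - D + (c:ℂ) • 1) * star U) * U
            = (star U * U) * (D * D - D + (c:ℂ) • 1) * (star U * U) by noncomm_ring,
            hUU, one_mul, mul_one]
      _ = 0 := by rw [h2]; simp
  have h3 := congrFun (congrFun hD i) i
  simp [D, Matrix.mul_apply, Matrix.diagonal_apply, Matrix.one_apply, Matrix.sub_apply,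
    Matrix.add_apply, Matrix.smul_apply, Finset.sum_ite_eq] at h3
  have h4 : ((hA.eigenvalues i : ℂ)) ^ 2 - (hA.eigenvalues i : ℂ) + (c : ℂ) = 0 := by
    rw [sq]; exact_mod_cast h3
  exact_mod_cast h4

lemma matLog_affine {d : ℕ} {A : Matrix (Fin d) (Fin d) ℂ} (hA : A.IsHermitian) (a b : ℝ)
    (h : ∀ i, Real.log (hA.eigenvalues i) = a + b * hA.eigenvalues i) :
    matLog A = ((a : ℂ)) • 1 + ((b : ℂ)) • A := by
  set U : Matrix (Fin d) (Fin d) ℂ := (hA.eigenvectorUnitary : Matrix (Fin d) (Fin d) ℂ)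
  have hUU' : U * star U = 1 := Unitary.coe_mul_star_self hA.eigenvectorUnitary
  rw [matLog, dif_pos hA]
  have hdg : Matrix.diagonal (fun i => (Real.log (hA.eigenvalues i) : ℂ))
      = ((a : ℂ)) • 1 + ((b : ℂ)) • Matrix.diagonal (RCLike.ofReal ∘ hA.eigenvalues) := by
    ext i j
    by_cases hij : i = j <;>
      simp [Matrix.diagonal_apply, hij, Matrix.one_apply, h]
  rw [hdg, mul_add, add_mul, Matrix.mul_smul, Matrix.mul_smul, Matrix.smul_mul,
    Matrix.smul_mul, mul_one, hUU', ← (show A = (hA.eigenvectorUnitary : Matrix (Fin d) (Fin d) ℂ) *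
      diagonal (RCLike.ofReal ∘ hA.eigenvalues) * star (hA.eigenvectorUnitary : Matrix (Fin d) (Fin d) ℂ)
      from hA.spectral_theorem)]

lemma rhoBloch_trace_mul (w x : EuclideanSpace ℝ (Fin 3)) :
    ((rhoBloch w * rhoBloch x).trace).re
      = (1 + (w 0 * x 0 + w 1 * x 1 + w 2 * x 2)) / 2 := by
  simp [rhoBloch, Matrix.trace, Matrix.mul_apply, Fin.sum_univ_two, Matrix.diag,
    Complex.add_re, Complex.mul_re, Complex.div_re]
  ring

lemma sq_sum_of_norm_one (u : EuclideanSpace ℝ (Fin 3)) (hu : ‖u‖ = 1) :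
    u 0 ^ 2 + u 1 ^ 2 + u 2 ^ 2 = 1 := by
  have h := real_inner_self_eq_norm_sq u
  rw [hu] at h
  simp only [PiLp.inner_apply, Fin.sum_univ_three, RCLike.inner_apply, conj_trivial] at h
  nlinarith [h]

lemma matLog_rhoBloch (t : ℝ) (ht0 : 0 < t) (ht1 : t < 1)
    (u : EuclideanSpace ℝ (Fin 3)) (hu : ‖u‖ = 1) :
    matLog (rhoBloch (t • u))
      = ((((Real.log ((1 + t) / 2) - ((Real.log ((1 + t) / 2)
          - Real.log ((1 - t) / 2)) / t) * ((1 + t) / 2)) : ℝ) : ℂ)) • 1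
        + ((((Real.log ((1 + t) / 2) - Real.log ((1 - t) / 2)) / t : ℝ) : ℂ))
          • rhoBloch (t • u) := by
  set b : ℝ := (Real.log ((1 + t) / 2) - Real.log ((1 - t) / 2)) / t with hb
  set a : ℝ := Real.log ((1 + t) / 2) - b * ((1 + t) / 2) with ha
  have hA := rhoBloch_herm (t • u)
  apply matLog_affine hA a b
  intro i
  have hs : (t • u) 0 ^ 2 + (t • u) 1 ^ 2 + (t • u) 2 ^ 2 = t ^ 2 := by
    have := sq_sum_of_norm_one u hu
    simp only [PiLp.smul_apply, smul_eq_mul]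
    nlinarith [this]
  have hquad := eigen_quad hA ((1 - t ^ 2) / 4) (by
    have := rhoBloch_quad (t • u) (t ^ 2) hs
    convert this using 2) i
  set lam := hA.eigenvalues i
  have hfac : (lam - (1 + t) / 2) * (lam - (1 - t) / 2) = 0 := by nlinarith [hquad]
  have ht : t ≠ 0 := ne_of_gt ht0
  rcases mul_eq_zero.mp hfac with hl | hl
  · have : lam = (1 + t) / 2 := by linarith [hl, sub_eq_zero.mp hl]
    rw [this, ha]
    ring
  · have hlv : lam = (1 - t) / 2 := by linarith [sub_eq_zero.mp hl]
    rw [hlv, ha, hb]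
    field_simp
    ring

theorem stmt11 (t : ℝ) (ht0 : 0 < t) (ht1 : t < 1)
    (u v : EuclideanSpace ℝ (Fin 3)) (hu : ‖u‖ = 1) (hv : ‖v‖ = 1)
    (w : EuclideanSpace ℝ (Fin 3)) (hw : ‖w‖ ≤ 1) :
    qDiv (rhoBloch w) (rhoBloch (t • u)) ≤ qDiv (rhoBloch w) (rhoBloch (t • v)) ↔
      ⟪w, u⟫_ℝ ≥ ⟪w, v⟫_ℝ := by
  set b : ℝ := (Real.log ((1 + t) / 2) - Real.log ((1 - t) / 2)) / t with hbdef
  set a : ℝ := Real.log ((1 + t) / 2) - b * ((1 + t) / 2) with hadef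
  have hlogu := matLog_rhoBloch t ht0 ht1 u hu
  have hlogv := matLog_rhoBloch t ht0 ht1 v hv
  have hb : 0 < b := by
    apply div_pos _ ht0
    have : Real.log ((1 - t) / 2) < Real.log ((1 + t) / 2) := by
      apply Real.log_lt_log (by linarith)
      linarith
    linarith
  set σ := rhoBloch w
  have hkey : qDiv σ (rhoBloch (t • v)) - qDiv σ (rhoBloch (t • u))
      = b * (((σ * rhoBloch (t • u)).trace).re - ((σ * rhoBloch (t • v)).trace).re) := by
    unfold qDiv
    rw [← Complex.sub_re, ← Matrix.trace_sub, ← mul_sub]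
    have h1 : matLog σ - matLog (rhoBloch (t • v)) - (matLog σ - matLog (rhoBloch (t • u)))
        = ((b : ℂ)) • (rhoBloch (t • u) - rhoBloch (t • v)) := by
      rw [hlogu, hlogv, hbdef]
      simp only [smul_sub]
      abel
    rw [h1, mul_smul_comm, Matrix.trace_smul, smul_eq_mul, Complex.re_ofReal_mul,
      mul_sub, Matrix.trace_sub, Complex.sub_re]
  have hAq : ((σ * rhoBloch (t • u)).trace).re = (1 + t * ⟪w, u⟫_ℝ) / 2 := by
    rw [rhoBloch_trace_mul]
    simp only [PiLp.inner_apply, Fin.sum_univ_three, RCLike.inner_apply, conj_trivial,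
      PiLp.smul_apply, smul_eq_mul]
    ring
  have hBq : ((σ * rhoBloch (t • v)).trace).re = (1 + t * ⟪w, v⟫_ℝ) / 2 := by
    rw [rhoBloch_trace_mul]
    simp only [PiLp.inner_apply, Fin.sum_univ_three, RCLike.inner_apply, conj_trivial,
      PiLp.smul_apply, smul_eq_mul]
    ring
  have hdiff : qDiv σ (rhoBloch (t • v)) - qDiv σ (rhoBloch (t • u))
      = b * t / 2 * (⟪w, u⟫_ℝ - ⟪w, v⟫_ℝ) := by
    rw [hkey, hAq, hBq]; ring
  have hbt : 0 < b * t / 2 := by positivity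
  constructor
  · intro h
    nlinarith [hdiff, hbt]
  · intro h
    nlinarith [hdiff, hbt]
end
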